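/- There is a bijection between the set of 'bad' Delannoy paths from (0,0) to (n,n) with l steps and the set of Delannoy paths from (0,0) to (n+1,n-1) with l steps. -/

import Mathlib

inductive Step : Type
  | E | D | N
deriving DecidableEq

instance : Fintype Step :=
  ⟨{Step.E, Step.D, Step.N}, fun x => by cases x <;> simp⟩

open Step Polynomial

/-- All words of length `l` over the step alphabet. -/
def Words (l : ℕ) : Finset (List Step) :=
  (Finset.univ : Finset (Fin l → Step)).image List.ofFn

/-- Delannoy paths from (0,0) to (m,n) with `l` steps, encoded as words:
`#E + #D = m`, `#N + #D = n`, length `l`. -/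
def DelSet (m n l : ℕ) : Finset (List Step) :=
  (Words l).filter fun w => w.count E + w.count D = m ∧ w.count N + w.count D = n

/-- A word is bad if some prefix contains more N's than E's. -/
def bad (w : List Step) : Bool :=
  (List.range (w.length + 1)).any fun k => (w.take k).count E < (w.take k).count N

/-- Bad Delannoy paths from (0,0) to (n,n) with `l` steps. -/
def BDelSet (n l : ℕ) : Finset (List Step) :=
  (DelSet n n l).filter fun w => bad w

/-- Schröder paths: Delannoy paths to (n,n) never going above the diagonal. -/
def SchSet (n l : ℕ) : Finset (List Step) :=
  (DelSet n n l).filter fun w => ¬ bad w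

/-- Major index of a word w_1 ⋯ w_l with respect to a ranking of the letters:
the sum of all positions i (1 ≤ i ≤ l-1) with w_i > w_{i+1}. -/
def maj (rank : Step → ℕ) (w : List Step) : ℕ :=
  ∑ i ∈ Finset.range (w.length - 1),
    if rank (w.getD (i + 1) E) < rank (w.getD i E) then i + 1 else 0

/-- q-integer [m] = 1 + q + ⋯ + q^{m-1}. -/
noncomputable def qint (m : ℕ) : Polynomial ℚ :=
  ∑ i ∈ Finset.range m, X ^ i

/-- q-factorial. -/
noncomputable def qfact : ℕ → Polynomial ℚ
  | 0 => 1
  | m + 1 => qfact m * qint (m + 1)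

/-- Gaussian binomial coefficient, via the q-Pascal recurrence. -/
noncomputable def qbinom : ℕ → ℕ → Polynomial ℚ
  | _, 0 => 1
  | 0, _ + 1 => 0
  | m + 1, k + 1 => qbinom m k + X ^ (k + 1) * qbinom m (k + 1)

/-- q-trinomial coefficient [l]!/([a]![b]![c]!), defined when a+b+c = l. -/
noncomputable def qbinom3 (l a b c : ℕ) : Polynomial ℚ :=
  if a + b + c = l then qbinom l a * qbinom (l - a) b else 0

/-- Depth after the first `i` steps: #N − #E. -/
def depth (w : List Step) (i : ℕ) : ℤ :=
  ((w.take i).count N : ℤ) - (w.take i).count E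

/-- `k` (0 ≤ k ≤ l) achieves the maximal running depth. -/
def isMaxDepth (w : List Step) (k : ℕ) : Bool :=
  (List.range (w.length + 1)).all fun i => decide (depth w i ≤ depth w k)

/-- The first index (number of steps) at which the running depth is maximal. -/
def firstDeep (w : List Step) : ℕ :=
  (List.range (w.length + 1)).findIdx (isMaxDepth w)

/-- The last index at which the running depth is maximal. -/
def lastDeep (w : List Step) : ℕ :=
  w.length - (List.range (w.length + 1)).reverse.findIdx (isMaxDepth w)

/-- Replace the first deepest step (the step w_k, k = firstDeep) with E. -/
def phi (w : List Step) : List Step := w.set (firstDeep w - 1) E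

/-- Replace the step following the last deepest point with N. -/
def phiInv (w : List Step) : List Step := w.set (lastDeep w) N

/-- Number of consecutive D's immediately after the first deepest step. -/
def runS (w : List Step) : ℕ := ((w.drop (firstDeep w)).takeWhile (· == D)).length

/-- Number of consecutive D's immediately before the first deepest step. -/
def runR (w : List Step) : ℕ :=
  ((w.take (firstDeep w - 1)).reverse.takeWhile (· == D)).length

/-- The window map: replace W₁ = D^r w_k D^s by D^{r-1} E D^{s+1} if r ≥ 1,
and by D^s E if r = 0. -/
def phiWin (w : List Step) : List Step :=
  let k := firstDeep w - 1
  let r := runR w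
  let s := runS w
  let seg : List Step :=
    if 1 ≤ r then List.replicate (r - 1) D ++ [E] ++ List.replicate (s + 1) D
    else List.replicate s D ++ [E]
  w.take (k - r) ++ seg ++ w.drop (k + s + 1)

/-- 0-based index of the first step after which the path is above the diagonal. -/
def firstAbove (w : List Step) : ℕ :=
  (List.range w.length).findIdx fun i =>
    decide ((w.take (i + 1)).count E < (w.take (i + 1)).count N)

/-- The map ψ of Bonin–Shapiro–Simion: replace with E the last N of the maximal
run of consecutive N's beginning at the first step going above the diagonal. -/
def psi (w : List Step) : List Step :=
  let i := firstAbove w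
  let j := i + ((w.drop i).takeWhile (· == N)).length - 1
  w.set j E

section AuxBSS


def chg : Step → ℤ
  | E => -1 | D => 0 | N => 1

lemma chg_eq (x : Step) :
    chg x = (if x = N then (1:ℤ) else 0) - (if x = E then 1 else 0) := by
  cases x <;> simp [chg]

lemma mem_words_iff {l : ℕ} {w : List Step} : w ∈ Words l ↔ w.length = l := by
  constructor
  · intro h
    simp only [Words, Finset.mem_image, Finset.mem_univ, true_and] at h
    obtain ⟨f, rfl⟩ := h; simp
  · intro h; subst h
    simp only [Words, Finset.mem_image, Finset.mem_univ, true_and]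
    exact ⟨w.get, List.ofFn_get w⟩

lemma mem_DelSet_iff {m n l : ℕ} {w : List Step} :
    w ∈ DelSet m n l ↔ w.length = l ∧ w.count E + w.count D = m ∧ w.count N + w.count D = n := by
  simp [DelSet, Finset.mem_filter, mem_words_iff, and_assoc]

lemma mem_BDelSet_iff {n l : ℕ} {w : List Step} :
    w ∈ BDelSet n l ↔ w ∈ DelSet n n l ∧ bad w = true := by
  simp [BDelSet, Finset.mem_filter]

lemma my_set_self (w : List Step) (i : ℕ) (h : i < w.length) : w.set i w[i] = w := by
  apply List.ext_getElem (by simp)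
  intro m h1 h2
  rw [List.getElem_set]
  split <;> simp_all

lemma depth_zero (w : List Step) : depth w 0 = 0 := by simp [depth]

lemma depth_length (w : List Step) : depth w w.length = (w.count N : ℤ) - w.count E := by
  simp [depth]

lemma depth_succ (w : List Step) (i : ℕ) (h : i < w.length) :
    depth w (i + 1) = depth w i + chg (w[i]) := by
  simp only [depth, List.take_succ, List.getElem?_eq_getElem h]
  cases hx : w[i] <;>
    simp [List.count_append, chg, List.count_cons, List.count_nil] <;> ring

lemma count_take_set (a c : Step) (w : List Step) (j : ℕ) (hj : j < w.length) (i : ℕ) :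
    (((w.set j c).take i).count a : ℤ) =
      ((w.take i).count a : ℤ) +
        if j < i then (if c = a then 1 else 0) - (if w[j] = a then 1 else 0) else 0 := by
  have hset : w.set j c = w.take j ++ c :: w.drop (j + 1) := by
    rw [List.set_eq_take_append_cons_drop]; simp [hj]
  have hlenA : (w.take j).length = j := by simp [List.length_take]; omega
  set x := w[j] with hx
  have hw : w.take i = (w.take j ++ x :: w.drop (j + 1)).take i := by
    conv_lhs => rw [← List.take_append_drop j w, List.drop_eq_getElem_cons hj]
  rcases le_or_gt i j with hij | hij
  · rw [hset, hw, List.take_append_of_le_length (by simp [List.length_take]; omega),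
      List.take_append_of_le_length (by simp [List.length_take]; omega),
      if_neg (by omega : ¬ j < i)]
    ring
  · obtain ⟨m, hm⟩ : ∃ m, i - j = m + 1 := ⟨i - j - 1, by omega⟩
    rw [hset, hw]
    rw [List.take_append, List.take_append, hlenA,
      List.take_of_length_le (by omega), hm, List.take_succ_cons, List.take_succ_cons]
    simp only [List.count_append, List.count_cons, if_pos hij, beq_iff_eq]
    push_cast
    split <;> split <;> simp <;> ring

lemma count_set_int (a c : Step) (w : List Step) (j : ℕ) (hj : j < w.length) :
    (((w.set j c)).count a : ℤ) =
      (w.count a : ℤ) + (if c = a then 1 else 0) - (if w[j] = a then 1 else 0) := by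
  have h := count_take_set a c w j hj w.length
  rw [List.take_of_length_le (by simp), List.take_length, if_pos hj] at h
  linarith

lemma depth_set (w : List Step) (j : ℕ) (hj : j < w.length) (c : Step) (i : ℕ) :
    depth (w.set j c) i = depth w i + if j < i then chg c - chg (w[j]) else 0 := by
  simp only [depth, count_take_set N c w j hj i, count_take_set E c w j hj i, chg_eq]
  split <;> ring

lemma bad_iff {w : List Step} : bad w = true ↔ ∃ k ≤ w.length, 1 ≤ depth w k := by
  simp only [bad, List.any_eq_true, List.mem_range, Nat.lt_succ_iff, decide_eq_true_eq, depth]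
  constructor
  · rintro ⟨k, hk, h⟩; exact ⟨k, hk, by omega⟩
  · rintro ⟨k, hk, h⟩; exact ⟨k, hk, by omega⟩

-- findIdx specs

lemma isMaxDepth_true_iff {w : List Step} {k : ℕ} :
    isMaxDepth w k = true ↔ ∀ i ≤ w.length, depth w i ≤ depth w k := by
  simp [isMaxDepth, List.all_eq_true, List.mem_range, Nat.lt_succ_iff]

lemma isMaxDepth_false_iff {w : List Step} {k : ℕ} :
    isMaxDepth w k = false ↔ ∃ i ≤ w.length, depth w k < depth w i := by
  rw [← Bool.not_eq_true, isMaxDepth_true_iff]; push_neg; rfl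

lemma exists_isMaxDepth (w : List Step) : ∃ k ≤ w.length, isMaxDepth w k = true := by
  obtain ⟨k, hk, hmax⟩ := Finset.exists_max_image (Finset.range (w.length + 1)) (depth w)
    ⟨0, by simp⟩
  refine ⟨k, by simpa [Nat.lt_succ_iff] using hk, isMaxDepth_true_iff.2 ?_⟩
  intro i hi
  exact hmax i (by simp [Nat.lt_succ_iff, hi])

lemma firstDeep_spec (w : List Step) :
    firstDeep w ≤ w.length ∧ isMaxDepth w (firstDeep w) = true ∧
      ∀ j < firstDeep w, isMaxDepth w j = false := by
  obtain ⟨k, hk, hmk⟩ := exists_isMaxDepth w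
  have hex : ∃ x ∈ List.range (w.length + 1), isMaxDepth w x = true :=
    ⟨k, by simp [Nat.lt_succ_iff, hk], hmk⟩
  have hlt : (List.range (w.length + 1)).findIdx (isMaxDepth w) < w.length + 1 := by
    simpa using List.findIdx_lt_length_of_exists hex
  refine ⟨Nat.lt_succ_iff.mp hlt, ?_, ?_⟩
  · have := @List.findIdx_getElem _ (isMaxDepth w) (List.range (w.length + 1)) (by simpa using hlt)
    simpa [List.getElem_range, firstDeep] using this
  · intro j hj
    have := List.not_of_lt_findIdx (p := isMaxDepth w) (xs := List.range (w.length + 1)) (i := j) hj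
    simpa [List.getElem_range] using this

lemma lastDeep_spec (w : List Step) :
    lastDeep w ≤ w.length ∧ isMaxDepth w (lastDeep w) = true ∧
      ∀ j, lastDeep w < j → j ≤ w.length → isMaxDepth w j = false := by
  obtain ⟨k, hk, hmk⟩ := exists_isMaxDepth w
  set L := w.length
  set fd := (List.range (L + 1)).reverse.findIdx (isMaxDepth w) with hfd
  have hex : ∃ x ∈ (List.range (L + 1)).reverse, isMaxDepth w x = true :=
    ⟨k, by simp [Nat.lt_succ_iff, hk], hmk⟩
  have hlt : fd < L + 1 := by
    simpa using List.findIdx_lt_length_of_exists hex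
  have hrev : ∀ i (h : i < L + 1), ((List.range (L + 1)).reverse)[i]'(by simpa using h) = L - i := by
    intro i h
    rw [List.getElem_reverse]
    simp [List.getElem_range]
  have hld : lastDeep w = L - fd := rfl
  refine ⟨by omega, ?_, ?_⟩
  · have := @List.findIdx_getElem _ (isMaxDepth w) ((List.range (L + 1)).reverse) (by simpa using hlt)
    rw [hrev fd hlt] at this
    simpa [hld] using this
  · intro j h1 h2
    have hij : L - j < fd := by omega
    have := List.not_of_lt_findIdx (p := isMaxDepth w) (xs := (List.range (L + 1)).reverse) hij
    rw [hrev (L - j) (by omega)] at this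
    have : isMaxDepth w (L - (L - j)) = false := this
    rwa [Nat.sub_sub_self h2] at this

lemma depth_lt_of_false {w : List Step} {k j : ℕ} (hk : isMaxDepth w k = true)
    (hj : isMaxDepth w j = false) : depth w j < depth w k := by
  obtain ⟨i, hi, hlt⟩ := isMaxDepth_false_iff.1 hj
  exact lt_of_lt_of_le hlt (isMaxDepth_true_iff.1 hk i hi)

lemma firstDeep_eq {w : List Step} {k : ℕ}
    (h1 : isMaxDepth w k = true) (h2 : ∀ j < k, isMaxDepth w j = false) :
    firstDeep w = k := by
  obtain ⟨hL, hT, hF⟩ := firstDeep_spec w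
  rcases lt_trichotomy (firstDeep w) k with h | h | h
  · exact absurd hT (by simp [h2 _ h])
  · exact h
  · exact absurd h1 (by simp [hF _ h])

lemma lastDeep_eq {w : List Step} {k : ℕ} (hk : k ≤ w.length)
    (h1 : isMaxDepth w k = true) (h2 : ∀ j, k < j → j ≤ w.length → isMaxDepth w j = false) :
    lastDeep w = k := by
  obtain ⟨hL, hT, hF⟩ := lastDeep_spec w
  rcases lt_trichotomy (lastDeep w) k with h | h | h
  · exact absurd h1 (by simp [hF _ h hk])
  · exact h
  · exact absurd hT (by simp [h2 _ h hL])

----------------------------------------------------------------------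
-- main direction lemmas

lemma phi_spec {n l : ℕ} {w : List Step} (hw : w ∈ BDelSet n l) :
    phi w ∈ DelSet (n + 1) (n - 1) l ∧ phiInv (phi w) = w := by
  rw [mem_BDelSet_iff, mem_DelSet_iff] at hw
  obtain ⟨⟨hlen, hE, hN⟩, hbad⟩ := hw
  obtain ⟨hkL, hkT, hkF⟩ := firstDeep_spec w
  have hM1 : 1 ≤ depth w (firstDeep w) := by
    obtain ⟨k0, hk0, h1⟩ := bad_iff.1 hbad
    exact le_trans h1 (isMaxDepth_true_iff.1 hkT k0 hk0)
  have hk1 : 1 ≤ firstDeep w := by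
    by_contra h
    have h0 : firstDeep w = 0 := by omega
    rw [h0, depth_zero] at hM1; omega
  have hkm1 : firstDeep w - 1 < w.length := by omega
  have hdk : depth w (firstDeep w) =
      depth w (firstDeep w - 1) + chg (w[firstDeep w - 1]'hkm1) := by
    have := depth_succ w (firstDeep w - 1) hkm1
    rwa [Nat.sub_add_cancel hk1] at this
  have hlt : depth w (firstDeep w - 1) < depth w (firstDeep w) :=
    depth_lt_of_false hkT (hkF _ (by omega))
  have hstep : w[firstDeep w - 1]'hkm1 = N := by
    rcases hx : w[firstDeep w - 1]'hkm1 with _ | _ | _ <;> rw [hx] at hdk <;>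
      simp [chg] at hdk <;> omega
  have hdkm : depth w (firstDeep w - 1) = depth w (firstDeep w) - 1 := by
    rw [hstep] at hdk; simp [chg] at hdk; omega
  have hphi : phi w = w.set (firstDeep w - 1) E := rfl
  have hdv : ∀ i, depth (phi w) i =
      depth w i + if firstDeep w - 1 < i then -2 else 0 := by
    intro i
    rw [hphi, depth_set w (firstDeep w - 1) hkm1 E i, hstep]
    norm_num [chg]
  have hcE : ((phi w).count E : ℤ) = w.count E + 1 := by
    rw [hphi, count_set_int E E w _ hkm1, hstep]; simp
  have hcN : ((phi w).count N : ℤ) = w.count N - 1 := by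
    rw [hphi, count_set_int N E w _ hkm1, hstep]; simp
  have hcD : ((phi w).count D : ℤ) = w.count D := by
    rw [hphi, count_set_int D E w _ hkm1, hstep]; simp
  have hlenv : (phi w).length = l := by rw [hphi, List.length_set, hlen]
  have hLv : (phi w).length = w.length := by rw [hphi, List.length_set]
  constructor
  · rw [mem_DelSet_iff]
    refine ⟨hlenv, by omega, by omega⟩
  · -- lastDeep (phi w) = firstDeep w - 1
    have hdvk : depth (phi w) (firstDeep w - 1) = depth w (firstDeep w) - 1 := by
      rw [hdv]; simp [hdkm]
    have hmaxv : isMaxDepth (phi w) (firstDeep w - 1) = true := by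
      rw [isMaxDepth_true_iff]
      intro i hi
      rw [hLv] at hi
      rw [hdv i, hdvk]
      rcases le_or_gt i (firstDeep w - 1) with h | h
      · rw [if_neg (by omega)]
        have : depth w i < depth w (firstDeep w) :=
          depth_lt_of_false hkT (hkF i (by omega))
        omega
      · rw [if_pos h]
        have : depth w i ≤ depth w (firstDeep w) := isMaxDepth_true_iff.1 hkT i hi
        omega
    have hfalse : ∀ j, firstDeep w - 1 < j → j ≤ (phi w).length →
        isMaxDepth (phi w) j = false := by
      intro j h1 h2
      rw [isMaxDepth_false_iff]
      refine ⟨firstDeep w - 1, by omega, ?_⟩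
      rw [hdv j, hdvk, if_pos h1]
      have : depth w j ≤ depth w (firstDeep w) :=
        isMaxDepth_true_iff.1 hkT j (by rw [hLv] at h2; omega)
      omega
    have hld : lastDeep (phi w) = firstDeep w - 1 :=
      lastDeep_eq (by omega) hmaxv hfalse
    rw [phiInv, hld, hphi, List.set_set, ← hstep]
    exact my_set_self w _ hkm1

lemma phiInv_spec {n l : ℕ} (hn : 1 ≤ n) {v : List Step} (hv : v ∈ DelSet (n + 1) (n - 1) l) :
    phiInv v ∈ BDelSet n l ∧ phi (phiInv v) = v := by
  rw [mem_DelSet_iff] at hv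
  obtain ⟨hlen, hE, hN⟩ := hv
  obtain ⟨hkL, hkT, hkF⟩ := lastDeep_spec v
  have hM0 : 0 ≤ depth v (lastDeep v) := by
    have := isMaxDepth_true_iff.1 hkT 0 (Nat.zero_le _)
    rwa [depth_zero] at this
  have hdL : depth v v.length = -2 := by
    rw [depth_length]; omega
  have hklt : lastDeep v < v.length := by
    rcases lt_or_eq_of_le hkL with h | h
    · exact h
    · rw [h, hdL] at hM0; omega
  have hdk : depth v (lastDeep v + 1) = depth v (lastDeep v) + chg (v[lastDeep v]'hklt) :=
    depth_succ v (lastDeep v) hklt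
  have hlt : depth v (lastDeep v + 1) < depth v (lastDeep v) :=
    depth_lt_of_false hkT (hkF _ (by omega) (by omega))
  have hstep : v[lastDeep v]'hklt = E := by
    rcases hx : v[lastDeep v]'hklt with _ | _ | _ <;> rw [hx] at hdk <;>
      simp [chg] at hdk <;> omega
  have hdkm : depth v (lastDeep v + 1) = depth v (lastDeep v) - 1 := by
    rw [hstep] at hdk; simp [chg] at hdk; omega
  have hpsi : phiInv v = v.set (lastDeep v) N := rfl
  have hdw : ∀ i, depth (phiInv v) i =
      depth v i + if lastDeep v < i then 2 else 0 := by
    intro i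
    rw [hpsi, depth_set v (lastDeep v) hklt N i, hstep]
    norm_num [chg]
  have hcE : ((phiInv v).count E : ℤ) = v.count E - 1 := by
    rw [hpsi, count_set_int E N v _ hklt, hstep]; simp
  have hcN : ((phiInv v).count N : ℤ) = v.count N + 1 := by
    rw [hpsi, count_set_int N N v _ hklt, hstep]; simp
  have hcD : ((phiInv v).count D : ℤ) = v.count D := by
    rw [hpsi, count_set_int D N v _ hklt, hstep]; simp
  have hlenw : (phiInv v).length = l := by rw [hpsi, List.length_set, hlen]
  have hLw : (phiInv v).length = v.length := by rw [hpsi, List.length_set]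
  have hdwk : depth (phiInv v) (lastDeep v + 1) = depth v (lastDeep v) + 1 := by
    rw [hdw]; simp [hdkm]; omega
  constructor
  · rw [mem_BDelSet_iff, mem_DelSet_iff]
    refine ⟨⟨hlenw, by omega, by omega⟩, ?_⟩
    rw [bad_iff]
    have h1le : 1 ≤ depth (phiInv v) (lastDeep v + 1) := by rw [hdwk]; omega
    exact ⟨lastDeep v + 1, by rw [hLw]; omega, h1le⟩
  · have hmaxw : isMaxDepth (phiInv v) (lastDeep v + 1) = true := by
      rw [isMaxDepth_true_iff]
      intro i hi
      rw [hLw] at hi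
      rw [hdw i, hdwk]
      rcases le_or_gt i (lastDeep v) with h | h
      · rw [if_neg (by omega)]
        have : depth v i ≤ depth v (lastDeep v) := isMaxDepth_true_iff.1 hkT i hi
        omega
      · rw [if_pos h]
        rcases eq_or_lt_of_le (Nat.succ_le_of_lt h) with h' | h'
        · subst h'
          simp only [Nat.succ_eq_add_one] at *
          omega
        · have : depth v i < depth v (lastDeep v) :=
            depth_lt_of_false hkT (hkF i (by omega) hi)
          omega
    have hfalse : ∀ j < lastDeep v + 1, isMaxDepth (phiInv v) j = false := by
      intro j hj
      rw [isMaxDepth_false_iff]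
      refine ⟨lastDeep v + 1, by omega, ?_⟩
      rw [hdw j, hdwk, if_neg (by omega)]
      have : depth v j ≤ depth v (lastDeep v) :=
        isMaxDepth_true_iff.1 hkT j (by omega)
      omega
    have hfd : firstDeep (phiInv v) = lastDeep v + 1 :=
      firstDeep_eq hmaxw hfalse
    rw [phi, hfd, Nat.add_sub_cancel, hpsi, List.set_set, ← hstep]
    exact my_set_self v _ hklt


end AuxBSS

/-- there is a bijection between bad Delannoy paths from (0,0) to
(n,n) with l steps and Delannoy paths from (0,0) to (n+1,n-1) with l steps. -/
theorem bad_equiv_shifted (n l : ℕ) (hn : 1 ≤ n) :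
    Nonempty ((BDelSet n l : Finset (List Step)) ≃ (DelSet (n + 1) (n - 1) l : Finset (List Step))) := by
  exact ⟨{ toFun := fun w => ⟨phi w.1, (phi_spec w.2).1⟩,
           invFun := fun v => ⟨phiInv v.1, (phiInv_spec hn v.2).1⟩,
           left_inv := fun w => Subtype.ext (phi_spec w.2).2,
           right_inv := fun v => Subtype.ext (phiInv_spec hn v.2).2 }⟩
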